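/- In a tortile category whose braiding is a symmetry, the twist satisfies θ_A² = id_A for every object A. -/

import Mathlib

open CategoryTheory MonoidalCategory

variable (C : Type*) [Category C] [MonoidalCategory C]

section
variable [BraidedCategory C]

/-- A twist on a braided monoidal category: a natural isomorphism `θ_A : A ≅ A` with
`θ_I = id` and `θ_{A⊗B} = σ_{B,A} ∘ (θ_B ⊗ θ_A) ∘ σ_{A,B}`. -/
structure Twist where
  app : ∀ A : C, A ≅ A
  natural : ∀ {A B : C} (f : A ⟶ B), f ≫ (app B).hom = (app A).hom ≫ f
  unit : (app (𝟙_ C)).hom = 𝟙 (𝟙_ C)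
  compat : ∀ A B : C,
    (app (A ⊗ B)).hom = (β_ A B).hom ≫ ((app B).hom ⊗ₘ (app A).hom) ≫ (β_ B A).hom

end

/-- In a tortile (ribbon) category whose braiding is a symmetry, the twist squares to the
identity: `θ_A² = id_A` for every object `A`.  Tortile means balanced autonomous with
`θ_{A*} = (θ_A)*`. -/
theorem tortile_symmetric_twist_squared [SymmetricCategory C] [RightRigidCategory C]
    (θ : Twist C) (tortile : ∀ A : C, (θ.app ((Aᘁ : C))).hom = ((θ.app A).hom)ᘁ)
    (A : C) : (θ.app A).hom ≫ (θ.app A).hom = 𝟙 A := by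
  set t := (θ.app A).hom with ht
  -- Step 1: naturality of θ at the coevaluation, together with θ_I = id:
  have h1 : η_ A (Aᘁ) ≫ (θ.app (A ⊗ Aᘁ)).hom = η_ A (Aᘁ) := by
    rw [θ.natural (η_ A (Aᘁ)), θ.unit, Category.id_comp]
  -- Step 2: expand via compat and use symmetry to cancel the braidings:
  have h2 : η_ A (Aᘁ) ≫ (t ⊗ₘ (θ.app (Aᘁ : C)).hom) = η_ A (Aᘁ) := by
    have := h1
    rw [θ.compat] at this
    rw [← BraidedCategory.braiding_naturality_assoc] at this
    simpa [SymmetricCategory.symmetry_assoc] using this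
  -- Step 3: use the tortile condition and slide the mate across the coevaluation:
  have h3 : η_ A (Aᘁ) ≫ ((t ≫ t) ▷ (Aᘁ : C)) = η_ A (Aᘁ) := by
    have := h2
    rw [tortile, tensorHom_def', coevaluation_comp_rightAdjointMate_assoc] at this
    simpa [comp_whiskerRight] using this
  -- Step 4: conclude via the hom-equivalence (zig-zag identities):
  have h4 := congrArg (tensorRightHomEquiv (𝟙_ C) A (Aᘁ) A).symm h3
  have h5 : η_ A (Aᘁ) ≫ ((𝟙 A) ▷ (Aᘁ : C)) = η_ A (Aᘁ) := by simp
  rw [tensorRightHomEquiv_symm_coevaluation_comp_whiskerRight, ← h5,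
    tensorRightHomEquiv_symm_coevaluation_comp_whiskerRight] at h4
  exact (cancel_epi (λ_ A).hom).mp h4
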